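/- Let α ∈ (1/2, 1) be a constant. There is n₀ ∈ ℕ such that for all n ≥ n₀ and all reals ε with 2^{−(2α−1)n/2} ≤ ε ≤ 1/6: every deterministic non-adaptive SSEQ algorithm (h, ℓ) with advantage at least 2/3 satisfies ‖ℓ‖₁ > n^{3/2} / (ε · (log₂ n)³ · (log₂(n/ε))²). -/

import Mathlib

open Finset

/-- Probability that the SSEQ oracle, on hidden set `A ⊆ [m]` and element queries
`ℓ = (ℓ_1, …, ℓ_m)`, returns the response `b ∈ {0,1}^m`: entries are independent,
`b_i = 0` if `i ∉ A`, and `b_i = 1` with probability `λ(ℓ_i) = 1 - (1 - ρ)^{ℓ_i}`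
if `i ∈ A`. -/
noncomputable def sseqRespP {m : ℕ} (ℓ : Fin m → ℕ) (ρ : ℝ)
    (A : Finset (Fin m)) (b : Fin m → Bool) : ℝ :=
  ∏ i : Fin m,
    if i ∈ A then (if b i then 1 - (1 - ρ) ^ (ℓ i) else (1 - ρ) ^ (ℓ i))
    else (if b i then 0 else 1)

/-- Probability that the deterministic non-adaptive SSEQ algorithm `(h, ℓ)` answers
"yes" (`true`) when the hidden set `A ⊆ [m]` is drawn by including each element of `[m]`
independently with probability `pr`. -/
noncomputable def sseqYesP (m : ℕ) (ℓ : Fin m → ℕ) (ρ pr : ℝ)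
    (h : (Fin m → Bool) → Bool) : ℝ :=
  ∑ A : Finset (Fin m), (pr ^ A.card * (1 - pr) ^ (m - A.card)) *
    ∑ b : Fin m → Bool, (if h b then 1 else 0) * sseqRespP ℓ ρ A b

/-- The advantage of the SSEQ algorithm `(h, ℓ)` with parameters `n`, `m`, `ε`. -/
noncomputable def sseqAdv (n m : ℕ) (ℓ : Fin m → ℕ) (ε : ℝ)
    (h : (Fin m → Bool) → Bool) : ℝ :=
  sseqYesP m ℓ (ε / Real.sqrt n) (1 / 2) h -
    sseqYesP m ℓ (ε / Real.sqrt n) (1 / 2 + Real.logb 2 n / Real.sqrt n) h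

/-- product-Bernoulli density -/
noncomputable def prodB {m : ℕ} (x : Fin m → ℝ) (b : Fin m → Bool) : ℝ :=
  ∏ i : Fin m, (if b i then x i else 1 - x i)

lemma prodB_sum_one {m : ℕ} (x : Fin m → ℝ) :
    ∑ b : Fin m → Bool, prodB x b = 1 := by
  have h := Finset.prod_univ_sum (fun _ : Fin m => (univ : Finset Bool))
      (fun i t => if t then x i else 1 - x i)
  rw [Fintype.piFinset_univ] at h
  unfold prodB
  rw [← h]
  simp

lemma weight_eq {m : ℕ} (pr : ℝ) (A : Finset (Fin m)) :
    pr ^ A.card * (1 - pr) ^ (m - A.card) = ∏ i : Fin m, (if i ∈ A then pr else 1 - pr) := by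
  rw [Finset.prod_ite, Finset.prod_const, Finset.prod_const]
  congr 1
  · congr 1
    simp [Finset.filter_univ_mem]
  · congr 1
    rw [show (univ.filter fun x => x ∉ A) = Aᶜ by ext; simp, Finset.card_compl]
    simp

lemma sum_w_resp {m : ℕ} (ℓ : Fin m → ℕ) (ρ pr : ℝ) (b : Fin m → Bool) :
    ∑ A : Finset (Fin m), (pr ^ A.card * (1 - pr) ^ (m - A.card)) * sseqRespP ℓ ρ A b
      = prodB (fun i => pr * (1 - (1 - ρ) ^ ℓ i)) b := by
  have step1 : ∀ A : Finset (Fin m),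
      (pr ^ A.card * (1 - pr) ^ (m - A.card)) * sseqRespP ℓ ρ A b
        = ∏ i : Fin m, (if i ∈ A then
            pr * (if b i then 1 - (1 - ρ) ^ (ℓ i) else (1 - ρ) ^ (ℓ i))
          else (1 - pr) * (if b i then 0 else 1)) := by
    intro A
    rw [weight_eq, sseqRespP, ← Finset.prod_mul_distrib]
    refine Finset.prod_congr rfl fun i _ => ?_
    by_cases hi : i ∈ A <;> simp [hi]
  simp_rw [step1]
  have step2 : ∀ A : Finset (Fin m),
      (∏ i : Fin m, (if i ∈ A then
          pr * (if b i then 1 - (1 - ρ) ^ (ℓ i) else (1 - ρ) ^ (ℓ i))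
        else (1 - pr) * (if b i then 0 else 1)))
      = (∏ i ∈ A, pr * (if b i then 1 - (1 - ρ) ^ (ℓ i) else (1 - ρ) ^ (ℓ i))) *
        ∏ i ∈ univ \ A, (1 - pr) * (if b i then 0 else 1) := by
    intro A
    rw [Finset.prod_ite]
    congr 1
    · congr 1; simp [Finset.filter_univ_mem]
    · congr 1; ext; simp
  simp_rw [step2]
  have hps : ∑ A ∈ (univ : Finset (Fin m)).powerset,
      (∏ i ∈ A, pr * (if b i then 1 - (1 - ρ) ^ (ℓ i) else (1 - ρ) ^ (ℓ i))) *
        ∏ i ∈ univ \ A, (1 - pr) * (if b i then 0 else 1)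
      = ∏ i : Fin m, (pr * (if b i then 1 - (1 - ρ) ^ (ℓ i) else (1 - ρ) ^ (ℓ i))
          + (1 - pr) * (if b i then 0 else 1)) := (Finset.prod_add _ _ _).symm
  rw [Finset.powerset_univ] at hps
  rw [hps]
  refine Finset.prod_congr rfl fun i _ => ?_
  by_cases hb : b i <;> simp [hb] <;> ring

lemma sseqYesP_eq {m : ℕ} (ℓ : Fin m → ℕ) (ρ pr : ℝ) (h : (Fin m → Bool) → Bool) :
    sseqYesP m ℓ ρ pr h = ∑ b : Fin m → Bool, (if h b then 1 else 0) *
      prodB (fun i => pr * (1 - (1 - ρ) ^ ℓ i)) b := by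
  unfold sseqYesP
  simp_rw [Finset.mul_sum]
  rw [Finset.sum_comm]
  refine Finset.sum_congr rfl fun b _ => ?_
  rw [← sum_w_resp ℓ ρ pr b, Finset.mul_sum]
  refine Finset.sum_congr rfl fun A _ => ?_
  ring

lemma prodB_nonneg {m : ℕ} {x : Fin m → ℝ} (h0 : ∀ i, 0 ≤ x i) (h1 : ∀ i, x i ≤ 1)
    (b : Fin m → Bool) : 0 ≤ prodB x b := by
  refine Finset.prod_nonneg fun i _ => ?_
  cases hb : b i
  · simp only [hb, Bool.false_eq_true, if_false]; linarith [h1 i]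
  · simpa [hb] using h0 i

lemma chiSq_prod {m : ℕ} (x y : Fin m → ℝ) :
    ∑ b : Fin m → Bool, (prodB x b) ^ 2 / prodB y b
      = ∏ i : Fin m, ((x i) ^ 2 / (y i) + (1 - x i) ^ 2 / (1 - y i)) := by
  have key : ∀ b : Fin m → Bool, (prodB x b) ^ 2 / prodB y b
      = ∏ i : Fin m, (if b i then (x i) ^ 2 / y i else (1 - x i) ^ 2 / (1 - y i)) := by
    intro b
    unfold prodB
    rw [← Finset.prod_pow, ← Finset.prod_div_distrib]
    refine Finset.prod_congr rfl fun i _ => ?_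
    by_cases hb : b i <;> simp [hb]
  simp_rw [key]
  have h := Finset.prod_univ_sum (fun _ : Fin m => (univ : Finset Bool))
      (fun i t => if t then (x i) ^ 2 / y i else (1 - x i) ^ 2 / (1 - y i))
  rw [Fintype.piFinset_univ] at h
  rw [← h]
  refine Finset.prod_congr rfl fun i _ => ?_
  simp

lemma prodB_zero_of {m : ℕ} {x y : Fin m → ℝ} (hy1 : ∀ i, y i < 1)
    (hz : ∀ i, y i = 0 → x i = 0) (b : Fin m → Bool) (hq : prodB y b = 0) :
    prodB x b = 0 := by
  rw [prodB, Finset.prod_eq_zero_iff] at hq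
  obtain ⟨i, -, hi⟩ := hq
  cases hb : b i
  · rw [hb] at hi
    simp only [Bool.false_eq_true, if_false] at hi
    linarith [hy1 i]
  · rw [hb] at hi
    simp only [if_true] at hi
    exact Finset.prod_eq_zero (Finset.mem_univ i) (by simp [hb, hz i hi])

lemma tv_sq_le {m : ℕ} (x y : Fin m → ℝ) (hx0 : ∀ i, 0 ≤ x i) (hx1 : ∀ i, x i ≤ 1)
    (hy0 : ∀ i, 0 ≤ y i) (hy1 : ∀ i, y i < 1) (hz : ∀ i, y i = 0 → x i = 0) :
    (∑ b : Fin m → Bool, |prodB x b - prodB y b|) ^ 2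
      ≤ (∏ i : Fin m, ((x i) ^ 2 / (y i) + (1 - x i) ^ 2 / (1 - y i))) - 1 := by
  have hQnn : ∀ b, 0 ≤ prodB y b := prodB_nonneg hy0 (fun i => (hy1 i).le)
  have hzero := prodB_zero_of hy1 hz
  have step1 : ∑ b : Fin m → Bool, |prodB x b - prodB y b|
      = ∑ b : Fin m → Bool,
        (|prodB x b - prodB y b| / Real.sqrt (prodB y b)) * Real.sqrt (prodB y b) := by
    refine Finset.sum_congr rfl fun b _ => ?_
    by_cases hq : prodB y b = 0
    · simp [hq, hzero b hq]
    · rw [div_mul_cancel₀]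
      exact Real.sqrt_ne_zero'.mpr (lt_of_le_of_ne (hQnn b) (Ne.symm hq))
  rw [step1]
  calc (∑ b : Fin m → Bool,
        (|prodB x b - prodB y b| / Real.sqrt (prodB y b)) * Real.sqrt (prodB y b)) ^ 2
      ≤ (∑ b : Fin m → Bool, (|prodB x b - prodB y b| / Real.sqrt (prodB y b)) ^ 2) *
        ∑ b : Fin m → Bool, (Real.sqrt (prodB y b)) ^ 2 :=
        Finset.sum_mul_sq_le_sq_mul_sq _ _ _
    _ = ∑ b : Fin m → Bool, (prodB x b - prodB y b) ^ 2 / prodB y b := by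
        have h2 : ∑ b : Fin m → Bool, (Real.sqrt (prodB y b)) ^ 2 = 1 := by
          rw [← prodB_sum_one y]
          exact Finset.sum_congr rfl fun b _ => Real.sq_sqrt (hQnn b)
        rw [h2, mul_one]
        refine Finset.sum_congr rfl fun b _ => ?_
        rw [div_pow, sq_abs, Real.sq_sqrt (hQnn b)]
    _ = (∑ b : Fin m → Bool, (prodB x b) ^ 2 / prodB y b) - 1 := by
        have hpt : ∀ b : Fin m → Bool, (prodB x b - prodB y b) ^ 2 / prodB y b
            = (prodB x b) ^ 2 / prodB y b - 2 * prodB x b + prodB y b := by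
          intro b
          by_cases hq : prodB y b = 0
          · simp [hq, hzero b hq]
          · field_simp
            ring
        simp_rw [hpt]
        rw [Finset.sum_add_distrib, Finset.sum_sub_distrib, ← Finset.mul_sum,
          prodB_sum_one, prodB_sum_one]
        ring
    _ = _ := by rw [chiSq_prod]

lemma chi_elem {lam η : ℝ} (h0 : 0 ≤ lam) (h1 : lam ≤ 1) (hη : 0 < η) (hη4 : η ≤ 1/4) :
    ((1/2) * lam) ^ 2 / ((1/2 + η) * lam) + (1 - (1/2) * lam) ^ 2 / (1 - (1/2 + η) * lam)
      ≤ 1 + 8 * η ^ 2 * lam := by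
  rcases eq_or_lt_of_le h0 with rfl | hl
  · norm_num
  · have hq : 0 < (1/2 + η) * lam := by positivity
    have hq2 : 0 < 1 - (1/2 + η) * lam := by nlinarith
    rw [div_add_div _ _ (ne_of_gt hq) (ne_of_gt hq2), div_le_iff₀ (by positivity)]
    have h5 : 1 ≤ 8 * ((1/2 + η) * (1 - (1/2 + η) * lam)) := by nlinarith
    nlinarith [mul_le_mul_of_nonneg_left h5 (sq_nonneg (η * lam))]


lemma adv_le_sqrt {n m : ℕ} (ℓ : Fin m → ℕ) (ε : ℝ) (h : (Fin m → Bool) → Bool)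
    (hn : 2 ≤ n) (hε : 0 < ε) (hε6 : ε ≤ 1/6)
    (hη4 : Real.logb 2 n / Real.sqrt n ≤ 1/4) :
    sseqAdv n m ℓ ε h ≤ Real.sqrt (Real.exp (8 * (Real.logb 2 n / Real.sqrt n) ^ 2 *
      ((ε / Real.sqrt n) * ∑ i : Fin m, (ℓ i : ℝ))) - 1) := by
  have hnR : (2 : ℝ) ≤ (n : ℝ) := by exact_mod_cast hn
  have hs0 : 0 < Real.sqrt n := Real.sqrt_pos.mpr (by linarith)
  have hs1 : 1 ≤ Real.sqrt n := by
    rw [show (1:ℝ) = Real.sqrt 1 by simp]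
    exact Real.sqrt_le_sqrt (by linarith)
  set η := Real.logb 2 n / Real.sqrt n with hηdef
  set ρ := ε / Real.sqrt n with hρdef
  have hηpos : 0 < η := div_pos (Real.logb_pos (by norm_num) (by linarith)) hs0
  have hρpos : 0 < ρ := div_pos hε hs0
  have hρ1 : ρ ≤ 1 := le_trans (div_le_self hε.le hs1) (by linarith)
  set lam : Fin m → ℝ := fun i => 1 - (1 - ρ) ^ (ℓ i) with hlamdef
  have hlam0 : ∀ i, 0 ≤ lam i := fun i => by
    have : (1 - ρ) ^ (ℓ i) ≤ 1 := pow_le_one₀ (by linarith) (by linarith)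
    simp only [hlamdef]; linarith
  have hlam1 : ∀ i, lam i ≤ 1 := fun i => by
    have : 0 ≤ (1 - ρ) ^ (ℓ i) := pow_nonneg (by linarith) _
    simp only [hlamdef]; linarith
  have hlamle : ∀ i, lam i ≤ ρ * (ℓ i : ℝ) := fun i => by
    have hb : 1 + (ℓ i : ℝ) * (-ρ) ≤ (1 - ρ) ^ (ℓ i) := by
      simpa [sub_eq_add_neg] using one_add_mul_le_pow (a := -ρ) (by linarith) (ℓ i)
    simp only [hlamdef]
    nlinarith [hb]
  set x : Fin m → ℝ := fun i => (1/2) * lam i with hxdef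
  set y : Fin m → ℝ := fun i => (1/2 + η) * lam i with hydef
  have hxeq : (fun i => (1/2 : ℝ) * (1 - (1 - ρ) ^ (ℓ i))) = x := by
    rw [hxdef, hlamdef]
  have hyeq : (fun i => (1/2 + η) * (1 - (1 - ρ) ^ (ℓ i))) = y := by
    rw [hydef, hlamdef]
  clear_value lam x y
  have hx0 : ∀ i, 0 ≤ x i := fun i => by
    simp only [hxdef]; nlinarith [hlam0 i]
  have hx1 : ∀ i, x i ≤ 1 := fun i => by
    simp only [hxdef]; nlinarith [hlam1 i, hlam0 i]
  have hy0 : ∀ i, 0 ≤ y i := fun i => by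
    simp only [hydef]; nlinarith [hlam0 i]
  have hy1 : ∀ i, y i < 1 := fun i => by
    simp only [hydef]; nlinarith [hlam0 i, hlam1 i]
  have hz : ∀ i, y i = 0 → x i = 0 := fun i hy => by
    simp only [hydef] at hy
    simp only [hxdef]
    rcases mul_eq_zero.mp hy with h' | h'
    · exfalso; linarith
    · rw [h', mul_zero]
  -- Step A : advantage ≤ L1 distance
  have stepA : sseqAdv n m ℓ ε h ≤ ∑ b : Fin m → Bool, |prodB x b - prodB y b| := by
    unfold sseqAdv
    rw [sseqYesP_eq, sseqYesP_eq, ← Finset.sum_sub_distrib]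
    rw [← hρdef, ← hηdef, hxeq, hyeq]
    refine Finset.sum_le_sum fun b _ => ?_
    by_cases hb : h b
    · simp only [hb, if_true, one_mul]; exact le_abs_self _
    · rw [if_neg hb]
      simpa using abs_nonneg (prodB x b - prodB y b)
  -- Step B : chi-square bound
  have hchi : ∀ i : Fin m, (x i) ^ 2 / (y i) + (1 - x i) ^ 2 / (1 - y i)
      ≤ 1 + 8 * η ^ 2 * lam i := fun i => by
    simp only [hxdef, hydef]
    exact chi_elem (hlam0 i) (hlam1 i) hηpos hη4
  have hcnn : ∀ i : Fin m, 0 ≤ (x i) ^ 2 / (y i) + (1 - x i) ^ 2 / (1 - y i) := fun i => by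
    have h1 : (0:ℝ) ≤ (x i) ^ 2 / (y i) := div_nonneg (sq_nonneg _) (hy0 i)
    have h2 : (0:ℝ) ≤ (1 - x i) ^ 2 / (1 - y i) := div_nonneg (sq_nonneg _) (by linarith [hy1 i])
    linarith
  have stepB : (∑ b : Fin m → Bool, |prodB x b - prodB y b|) ^ 2
      ≤ Real.exp (8 * η ^ 2 * (ρ * ∑ i : Fin m, (ℓ i : ℝ))) - 1 := by
    refine le_trans (tv_sq_le x y hx0 hx1 hy0 hy1 hz) ?_
    have hprod : (∏ i : Fin m, ((x i) ^ 2 / (y i) + (1 - x i) ^ 2 / (1 - y i)))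
        ≤ Real.exp (8 * η ^ 2 * (ρ * ∑ i : Fin m, (ℓ i : ℝ))) := by
      calc (∏ i : Fin m, ((x i) ^ 2 / (y i) + (1 - x i) ^ 2 / (1 - y i)))
          ≤ ∏ i : Fin m, Real.exp (8 * η ^ 2 * lam i) := by
            refine Finset.prod_le_prod (fun i _ => hcnn i) (fun i _ => ?_)
            refine le_trans (hchi i) ?_
            have := Real.add_one_le_exp (8 * η ^ 2 * lam i)
            linarith
        _ = Real.exp (∑ i : Fin m, 8 * η ^ 2 * lam i) := (Real.exp_sum _ _).symm
        _ ≤ Real.exp (8 * η ^ 2 * (ρ * ∑ i : Fin m, (ℓ i : ℝ))) := by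
            rw [Real.exp_le_exp]
            calc ∑ i : Fin m, 8 * η ^ 2 * lam i
                ≤ ∑ i : Fin m, (8 * η ^ 2 * ρ) * (ℓ i : ℝ) := by
                  refine Finset.sum_le_sum fun i _ => ?_
                  have h8 : (0:ℝ) ≤ 8 * η ^ 2 := by positivity
                  have := mul_le_mul_of_nonneg_left (hlamle i) h8
                  linarith
              _ = 8 * η ^ 2 * (ρ * ∑ i : Fin m, (ℓ i : ℝ)) := by
                  rw [← Finset.mul_sum]; ring
    linarith
  -- combine
  have habs : 0 ≤ ∑ b : Fin m → Bool, |prodB x b - prodB y b| :=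
    Finset.sum_nonneg fun b _ => abs_nonneg _
  have hnn : (0:ℝ) ≤ Real.exp (8 * η ^ 2 * (ρ * ∑ i : Fin m, (ℓ i : ℝ))) - 1 :=
    le_trans (sq_nonneg _) stepB
  exact le_trans stepA ((Real.le_sqrt habs hnn).mpr stepB)

set_option maxHeartbeats 1000000 in

set_option maxHeartbeats 1000000 in
theorem stmt12 (α : ℝ) (hα₁ : 1 / 2 < α) (hα₂ : α < 1) :
    ∃ n₀ : ℕ, ∀ (n : ℕ) (ε : ℝ), n₀ ≤ n →
      (2 : ℝ) ^ (-((2 * α - 1) * (n : ℝ) / 2)) ≤ ε → ε ≤ 1 / 6 →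
      ∀ m : ℕ, m = ⌈2 * (1 - α) * (n : ℝ) + (1 - α) * Real.sqrt n * Real.logb 2 n⌉₊ →
      ∀ (ℓ : Fin m → ℕ) (h : (Fin m → Bool) → Bool),
        2 / 3 ≤ sseqAdv n m ℓ ε h →
        (n : ℝ) ^ ((3 : ℝ) / 2) /
            (ε * (Real.logb 2 n) ^ 3 * (Real.logb 2 ((n : ℝ) / ε)) ^ 2) <
          (∑ i : Fin m, (ℓ i : ℝ)) := by
  refine ⟨2 ^ 24, fun n ε hn hεlo hε6 m _hm ℓ h hadv => ?_⟩
  have hε : 0 < ε := lt_of_lt_of_le (Real.rpow_pos_of_pos (by norm_num) _) hεlo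
  have hN : (16777216 : ℝ) ≤ (n : ℝ) := by
    have : ((2 ^ 24 : ℕ) : ℝ) ≤ (n : ℝ) := by exact_mod_cast hn
    norm_num at this ⊢
    linarith
  have hn2 : 2 ≤ n := le_trans (by norm_num) hn
  have hNpos : (0 : ℝ) < (n : ℝ) := by linarith
  set s := Real.sqrt (n : ℝ) with hsdef
  have hs0 : 0 < s := Real.sqrt_pos.mpr hNpos
  have hs4096 : (4096 : ℝ) ≤ s := by
    rw [hsdef, show (4096:ℝ) = Real.sqrt (4096 ^ 2) by
      rw [Real.sqrt_sq (by norm_num)]]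
    exact Real.sqrt_le_sqrt (by norm_num; linarith)
  set L := Real.logb 2 (n : ℝ) with hLdef
  have hL24 : (24 : ℝ) ≤ L := by
    rw [hLdef, show (24:ℝ) = Real.logb 2 ((2:ℝ) ^ (24:ℝ)) by
      rw [Real.logb_rpow (by norm_num) (by norm_num)]]
    apply Real.logb_le_logb_of_le (by norm_num) (by positivity)
    rw [show ((2:ℝ) ^ (24:ℝ)) = 16777216 by
      rw [show (24:ℝ) = ((24:ℕ):ℝ) by norm_num, Real.rpow_natCast]; norm_num]
    linarith
  -- L ≤ s / 4
  have hη4 : L / s ≤ 1 / 4 := by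
    set t := Real.sqrt s with htdef
    have ht0 : 0 < t := Real.sqrt_pos.mpr hs0
    have ht24 : (24 : ℝ) ≤ t := by
      rw [htdef, show (24:ℝ) = Real.sqrt (24 ^ 2) by rw [Real.sqrt_sq (by norm_num)]]
      exact Real.sqrt_le_sqrt (by norm_num; linarith)
    have hts : t * t = s := Real.mul_self_sqrt hs0.le
    have htN : t ^ 4 = (n : ℝ) := by
      have h1 : t ^ 2 = s := by rw [sq]; exact hts
      have h2 : s ^ 2 = (n : ℝ) := Real.sq_sqrt hNpos.le
      calc t ^ 4 = (t ^ 2) ^ 2 := by ring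
        _ = (n : ℝ) := by rw [h1, h2]
    have hlogN : Real.log (n : ℝ) ≤ s / 6 := by
      have h3 : Real.log (n : ℝ) = 4 * Real.log t := by
        rw [← htN, Real.log_pow]; norm_num
      have h4 : Real.log t ≤ t - 1 := Real.log_le_sub_one_of_pos ht0
      have h5 : 24 * t ≤ s := by nlinarith
      rw [h3]; nlinarith
    have hlog2 : (2/3 : ℝ) ≤ Real.log 2 := by
      have := Real.log_two_gt_d9
      linarith
    have hLs : L ≤ s / 4 := by
      rw [hLdef, Real.logb, div_le_iff₀ (by linarith : (0:ℝ) < Real.log 2)]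
      calc Real.log (n:ℝ) ≤ s / 6 := hlogN
        _ ≤ s / 4 * (2/3) := by linarith
        _ ≤ s / 4 * Real.log 2 := by nlinarith
    rw [div_le_iff₀ hs0]
    linarith
  set L2 := Real.logb 2 ((n : ℝ) / ε) with hL2def
  have hL2 : L ≤ L2 := by
    rw [hLdef, hL2def]
    apply Real.logb_le_logb_of_le (by norm_num) hNpos
    rw [le_div_iff₀ hε]
    nlinarith
  have hL2pos : (0:ℝ) < L2 := by linarith
  have hLpos : (0:ℝ) < L := by linarith
  -- contradiction setup
  by_contra hcon
  push_neg at hcon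
  set S := ∑ i : Fin m, (ℓ i : ℝ) with hSdef
  have hbound := adv_le_sqrt ℓ ε h hn2 hε hε6 hη4
  -- the exponent is at most 1/4
  have hN32 : (n : ℝ) ^ ((3:ℝ)/2) = s ^ (3:ℕ) := by
    rw [hsdef, Real.sqrt_eq_rpow, ← Real.rpow_natCast ((n:ℝ) ^ ((1:ℝ)/2)) 3,
      ← Real.rpow_mul hNpos.le]
    norm_num
  have hT : 8 * (L / s) ^ 2 * ((ε / s) * S) ≤ 1/4 := by
    have hmul : (0:ℝ) ≤ 8 * (L / s) ^ 2 * (ε / s) := by positivity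
    have step : 8 * (L / s) ^ 2 * ((ε / s) * S)
        ≤ 8 * (L / s) ^ 2 * ((ε / s) * ((n : ℝ) ^ ((3:ℝ)/2) / (ε * L ^ 3 * L2 ^ 2))) := by
      have hinner : (ε / s) * S ≤ (ε / s) * ((n : ℝ) ^ ((3:ℝ)/2) / (ε * L ^ 3 * L2 ^ 2)) :=
        mul_le_mul_of_nonneg_left hcon (div_nonneg hε.le hs0.le)
      exact mul_le_mul_of_nonneg_left hinner (by positivity)
    refine le_trans step ?_
    have heq : 8 * (L / s) ^ 2 * ((ε / s) * ((n : ℝ) ^ ((3:ℝ)/2) / (ε * L ^ 3 * L2 ^ 2)))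
        = 8 / (L * L2 ^ 2) := by
      rw [hN32]
      field_simp
    rw [heq]
    rw [div_le_iff₀ (by positivity)]
    nlinarith
  have hexp : Real.exp (8 * (L / s) ^ 2 * ((ε / s) * S)) ≤ 4/3 := by
    have h14 : Real.exp (8 * (L / s) ^ 2 * ((ε / s) * S)) ≤ Real.exp (1/4) :=
      Real.exp_le_exp.mpr hT
    have he4 : Real.exp ((1:ℝ)/4) ≤ 4/3 := by
      have hp : Real.exp ((1:ℝ)/4) ^ (4:ℕ) = Real.exp 1 := by
        rw [← Real.exp_nat_mul]; norm_num
      refine le_of_pow_le_pow_left₀ (n := 4) (by norm_num) (by norm_num) ?_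
      rw [hp]
      have := Real.exp_one_lt_d9
      norm_num
      linarith
    linarith
  have hfinal : sseqAdv n m ℓ ε h < 2/3 := by
    calc sseqAdv n m ℓ ε h
        ≤ Real.sqrt (Real.exp (8 * (L / s) ^ 2 * ((ε / s) * S)) - 1) := hbound
      _ ≤ Real.sqrt (1/3) := Real.sqrt_le_sqrt (by linarith)
      _ < 2/3 := by
          rw [show (2/3 : ℝ) = Real.sqrt ((2/3)^2) by rw [Real.sqrt_sq (by norm_num)]]
          refine Real.sqrt_lt_sqrt (by norm_num) (by norm_num)
  linarith
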